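/- (Lemma 1, first part.) The optimal value function of the decoupled single-source subproblem is nondecreasing in the age: if J* is the unique fixed point of the Bellman operator T, then for every energy level E ∈ {0,…,B} and all ages K ≤ K' in {1,…,Kmax}, J*(E,K) ≤ J*(E,K'). -/
import Mathlib


open Finset Filter Topology

/-- Energy level after one unit of energy arrival, clamped at buffer size `B`. -/
def clampAdd {B : ℕ} (e : Fin (B+1)) : Fin (B+1) :=
  ⟨min (e.val + 1) B, by omega⟩

/-- Energy level after spending `Es` units of energy. -/
def subE {B : ℕ} (Es : ℕ) (e : Fin (B+1)) : Fin (B+1) :=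
  ⟨e.val - Es, by have := e.isLt; omega⟩

/-- Age update `K⁺ = min (K+1) Kmax`; ages in `{1,…,Kmax}` are represented by
`Fin Kmax`, where index `k` stands for age `k+1`. -/
def succAge {Kmax : ℕ} (k : Fin Kmax) : Fin Kmax :=
  ⟨min (k.val + 1) (Kmax - 1), by have := k.isLt; omega⟩

/-- The state of age `1` (index `0`). -/
def ageOne {Kmax : ℕ} (k : Fin Kmax) : Fin Kmax := ⟨0, k.pos⟩

/-- The real-valued age of a state with age index `k`. -/
def ageVal {Kmax : ℕ} (k : Fin Kmax) : ℝ := (k.val : ℝ) + 1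

/-- `G_J(E,K) = λ·J(min(E+1,B),K) + (1−λ)·J(E,K)`. -/
noncomputable def GVal {B Kmax : ℕ} (lam : ℝ) (J : Fin (B+1) × Fin Kmax → ℝ)
    (e : Fin (B+1)) (k : Fin Kmax) : ℝ :=
  lam * J (clampAdd e, k) + (1 - lam) * J (e, k)

/-- The not-sampling value `u_J(E,K) = K + α·G_J(E,K⁺)`. -/
noncomputable def uVal {B Kmax : ℕ} (lam alpha : ℝ) (J : Fin (B+1) × Fin Kmax → ℝ)
    (e : Fin (B+1)) (k : Fin Kmax) : ℝ :=
  ageVal k + alpha * GVal lam J e (succAge k)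

/-- The expected sampling cost
`σ_J(p) = K·(1−p) + α·p·G_J(E−Es,1) + α·(1−p)·G_J(E−Es,K⁺)`. -/
noncomputable def sigVal {B Kmax : ℕ} (Es : ℕ) (lam alpha : ℝ)
    (J : Fin (B+1) × Fin Kmax → ℝ) (e : Fin (B+1)) (k : Fin Kmax) (p : ℝ) : ℝ :=
  ageVal k * (1 - p) + alpha * p * GVal lam J (subE Es e) (ageOne k)
    + alpha * (1 - p) * GVal lam J (subE Es e) (succAge k)

/-- The post-probing value `W_J(E,K,p) = min { u_J(E,K), σ_J(p) }`. -/
noncomputable def WVal {B Kmax : ℕ} (Es : ℕ) (lam alpha : ℝ)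
    (J : Fin (B+1) × Fin Kmax → ℝ) (e : Fin (B+1)) (k : Fin Kmax) (p : ℝ) : ℝ :=
  min (uVal lam alpha J e k) (sigVal Es lam alpha J e k p)

/-- The probing value `v_J(E,K) = μ̂ + Σ_j q_j · W_J(E,K,p_j)`. -/
noncomputable def vVal {B Kmax : ℕ} (Es m : ℕ) (lam alpha mu : ℝ)
    (q pr : Fin m → ℝ) (J : Fin (B+1) × Fin Kmax → ℝ)
    (e : Fin (B+1)) (k : Fin Kmax) : ℝ :=
  mu + ∑ j, q j * WVal Es lam alpha J e k (pr j)

/-- The Bellman operator `T` of the decoupled single-source subproblem. -/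
noncomputable def bellman {B Kmax : ℕ} (Es m : ℕ) (lam alpha mu : ℝ)
    (q pr : Fin m → ℝ) (J : Fin (B+1) × Fin Kmax → ℝ) :
    Fin (B+1) × Fin Kmax → ℝ :=
  fun s =>
    if Es ≤ s.1.val then
      min (uVal lam alpha J s.1 s.2) (vVal Es m lam alpha mu q pr J s.1 s.2)
    else uVal lam alpha J s.1 s.2

theorem optimal_value_age_monotone (B Es Kmax m : ℕ) (lam alpha mu : ℝ) (q pr : Fin m → ℝ)
    (hEs1 : 1 ≤ Es) (hEsB : Es ≤ B)
    (hlam0 : 0 ≤ lam) (hlam1 : lam ≤ 1)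
    (halpha0 : 0 ≤ alpha) (halpha1 : alpha < 1)
    (hmu : 0 ≤ mu) (hK : 1 ≤ Kmax) (hm : 1 ≤ m)
    (hq0 : ∀ j, 0 ≤ q j) (hq1 : ∑ j, q j = 1)
    (hpr : ∀ j, 0 ≤ pr j ∧ pr j ≤ 1)
    (Jstar : Fin (B+1) × Fin Kmax → ℝ)
    (hfix : bellman Es m lam alpha mu q pr Jstar = Jstar)
    (huniq : ∀ J' : Fin (B+1) × Fin Kmax → ℝ, bellman Es m lam alpha mu q pr J' = J' → J' = Jstar) :
      ∀ (e : Fin (B+1)) (k k' : Fin Kmax), k ≤ k' → Jstar (e, k) ≤ Jstar (e, k') := by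
  classical
  have hKne : Nonempty (Fin Kmax) := ⟨⟨0, hK⟩⟩
  set f : Fin (B+1) × Fin Kmax × Fin Kmax → ℝ := fun t =>
    if t.2.1 ≤ t.2.2 then Jstar (t.1, t.2.1) - Jstar (t.1, t.2.2) else 0 with hf
  have hne : (Finset.univ : Finset (Fin (B+1) × Fin Kmax × Fin Kmax)).Nonempty :=
    Finset.univ_nonempty
  set D : ℝ := Finset.sup' Finset.univ hne f with hDdef
  have hD0 : 0 ≤ D := by
    have h0 : f ((⟨0, by omega⟩, ⟨0, hK⟩, ⟨0, hK⟩) : Fin (B+1) × Fin Kmax × Fin Kmax) = 0 := by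
      simp [hf]
    calc (0:ℝ) = f ((⟨0, by omega⟩, ⟨0, hK⟩, ⟨0, hK⟩) : Fin (B+1) × Fin Kmax × Fin Kmax) := h0.symm
      _ ≤ D := by rw [hDdef]; exact Finset.le_sup' f (Finset.mem_univ _)
  have hDle : ∀ (e : Fin (B+1)) (k k' : Fin Kmax), k ≤ k' →
      Jstar (e, k) - Jstar (e, k') ≤ D := by
    intro e k k' h
    calc Jstar (e, k) - Jstar (e, k') = f (e, k, k') := by simp [hf, h]
      _ ≤ D := by rw [hDdef]; exact Finset.le_sup' f (Finset.mem_univ _)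
  have hJD : ∀ (e : Fin (B+1)) (k k' : Fin Kmax), k ≤ k' →
      Jstar (e, k) ≤ Jstar (e, k') + D := by
    intro e k k' h; have := hDle e k k' h; linarith
  have hG : ∀ (e : Fin (B+1)) (k k' : Fin Kmax), k ≤ k' →
      GVal lam Jstar e k ≤ GVal lam Jstar e k' + D := by
    intro e k k' h
    have h1 := mul_le_mul_of_nonneg_left (hJD (clampAdd e) k k' h) hlam0
    have h2 := mul_le_mul_of_nonneg_left (hJD e k k' h)
      (by linarith : (0:ℝ) ≤ 1 - lam)
    simp only [GVal]
    nlinarith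
  have hsuccmono : ∀ k k' : Fin Kmax, k ≤ k' → succAge k ≤ succAge k' := by
    intro k k' h
    rw [Fin.le_def] at h ⊢
    simp only [succAge]
    omega
  have hagemono : ∀ k k' : Fin Kmax, k ≤ k' → ageVal k ≤ ageVal k' := by
    intro k k' h
    rw [Fin.le_def] at h
    simp only [ageVal]
    have : (k.val : ℝ) ≤ (k'.val : ℝ) := by exact_mod_cast h
    linarith
  have hu : ∀ (e : Fin (B+1)) (k k' : Fin Kmax), k ≤ k' →
      uVal lam alpha Jstar e k ≤ uVal lam alpha Jstar e k' + alpha * D := by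
    intro e k k' h
    have h1 := mul_le_mul_of_nonneg_left
      (hG e (succAge k) (succAge k') (hsuccmono k k' h)) halpha0
    have h2 := hagemono k k' h
    simp only [uVal]
    nlinarith
  have hsig : ∀ (e : Fin (B+1)) (k k' : Fin Kmax) (p : ℝ), k ≤ k' →
      0 ≤ p → p ≤ 1 →
      sigVal Es lam alpha Jstar e k p ≤ sigVal Es lam alpha Jstar e k' p + alpha * D := by
    intro e k k' p h hp0 hp1
    have hao : (ageOne k : Fin Kmax) = ageOne k' := rfl
    have h1 := mul_le_mul_of_nonneg_right (hagemono k k' h)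
      (by linarith : (0:ℝ) ≤ 1 - p)
    have h2 := mul_le_mul_of_nonneg_left
      (hG (subE Es e) (succAge k) (succAge k') (hsuccmono k k' h))
      (by nlinarith : (0:ℝ) ≤ alpha * (1 - p))
    have h3 : 0 ≤ alpha * p * D := by positivity
    simp only [sigVal, hao]
    nlinarith
  have hW : ∀ (e : Fin (B+1)) (k k' : Fin Kmax) (p : ℝ), k ≤ k' →
      0 ≤ p → p ≤ 1 →
      WVal Es lam alpha Jstar e k p ≤ WVal Es lam alpha Jstar e k' p + alpha * D := by
    intro e k k' p h hp0 hp1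
    have := min_le_min (hu e k k' h) (hsig e k k' p h hp0 hp1)
    simpa [WVal, min_add_add_right] using this
  have hv : ∀ (e : Fin (B+1)) (k k' : Fin Kmax), k ≤ k' →
      vVal Es m lam alpha mu q pr Jstar e k ≤
        vVal Es m lam alpha mu q pr Jstar e k' + alpha * D := by
    intro e k k' h
    simp only [vVal]
    have hsum : ∑ j, q j * WVal Es lam alpha Jstar e k (pr j) ≤
        ∑ j, q j * (WVal Es lam alpha Jstar e k' (pr j) + alpha * D) := by
      refine Finset.sum_le_sum fun j _ => ?_
      exact mul_le_mul_of_nonneg_left (hW e k k' (pr j) h (hpr j).1 (hpr j).2) (hq0 j)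
    have heq : ∑ j, q j * (WVal Es lam alpha Jstar e k' (pr j) + alpha * D) =
        (∑ j, q j * WVal Es lam alpha Jstar e k' (pr j)) + alpha * D := by
      simp only [mul_add, Finset.sum_add_distrib, ← Finset.sum_mul, hq1, one_mul]
    linarith [hsum, heq.le]
  have hstep : ∀ (e : Fin (B+1)) (k k' : Fin Kmax), k ≤ k' →
      Jstar (e, k) ≤ Jstar (e, k') + alpha * D := by
    intro e k k' h
    have hb1 := congrFun hfix (e, k)
    have hb2 := congrFun hfix (e, k')
    simp only [bellman] at hb1 hb2
    by_cases hE : Es ≤ e.val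
    · rw [if_pos hE] at hb1 hb2
      rw [← hb1, ← hb2]
      have := min_le_min (hu e k k' h) (hv e k k' h)
      simpa [min_add_add_right] using this
    · rw [if_neg hE] at hb1 hb2
      rw [← hb1, ← hb2]
      exact hu e k k' h
  have hDcontr : D ≤ alpha * D := by
    rw [hDdef]
    refine Finset.sup'_le _ _ fun t _ => ?_
    simp only [hf]
    split_ifs with ht
    · have := hstep t.1 t.2.1 t.2.2 ht; linarith
    · positivity
  have hDneg : D ≤ 0 := by nlinarith
  intro e k k' h
  have := hDle e k k' h
  linarith
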